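/- Let h be an entropy conservative two-point flux with respect to entropy variables v and potential ψ, with associated numerical entropy flux H. For any sequence of states u : ℤ → E, any p ≥ 1 and any coefficients c_1, …, c_p ∈ ℝ, define the LMR flux f_{k+1/2} := ∑_{r=1}^{p} c_r ∑_{q=0}^{r−1} h(u_{k−q}, u_{k+r−q}) and the LMR entropy flux F_{k+1/2} := ∑_{r=1}^{p} c_r ∑_{q=0}^{r−1} H(u_{k−q}, u_{k+r−q}). Then for every k ∈ ℤ the per-cell entropy conservation identity holds: ⟨v(u_k), f_{k−1/2} − f_{k+1/2}⟩ = F_{k−1/2} − F_{k+1/2}. -/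
import Mathlib


open RealInnerProductSpace

/-- Per-cell entropy conservation for the LMR fluxes: with
`f_{k+1/2} := ∑_{r=1}^{p} c_r ∑_{q=0}^{r−1} h(u_{k−q}, u_{k+r−q})` and
`F_{k+1/2} := ∑_{r=1}^{p} c_r ∑_{q=0}^{r−1} H(u_{k−q}, u_{k+r−q})`, one has
`⟨v(u_k), f_{k−1/2} − f_{k+1/2}⟩ = F_{k−1/2} − F_{k+1/2}`. -/
theorem lmr_flux_per_cell_entropy_conservation
    (N : ℕ) (hN : 1 ≤ N)
    (h : EuclideanSpace ℝ (Fin N) × EuclideanSpace ℝ (Fin N) → EuclideanSpace ℝ (Fin N))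
    (v : EuclideanSpace ℝ (Fin N) → EuclideanSpace ℝ (Fin N))
    (ψ : EuclideanSpace ℝ (Fin N) → ℝ)
    (hEC : ∀ a b, ⟪v b - v a, h (a, b)⟫ = ψ b - ψ a)
    (H : EuclideanSpace ℝ (Fin N) → EuclideanSpace ℝ (Fin N) → ℝ)
    (hH : ∀ a b, H a b = (1 / 2) * ⟪v a + v b, h (a, b)⟫ - (1 / 2) * (ψ a + ψ b))
    (u : ℤ → EuclideanSpace ℝ (Fin N))
    (p : ℕ) (hp : 1 ≤ p) (c : ℕ → ℝ) (k : ℤ) :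
    ⟪v (u k),
        (∑ r ∈ Finset.Icc 1 p, c r •
            ∑ q ∈ Finset.range r, h (u ((k - 1) - (q : ℤ)), u ((k - 1) + (r : ℤ) - (q : ℤ))))
          - (∑ r ∈ Finset.Icc 1 p, c r •
              ∑ q ∈ Finset.range r, h (u (k - (q : ℤ)), u (k + (r : ℤ) - (q : ℤ))))⟫
      = (∑ r ∈ Finset.Icc 1 p, c r *
            ∑ q ∈ Finset.range r, H (u ((k - 1) - (q : ℤ))) (u ((k - 1) + (r : ℤ) - (q : ℤ))))
          - (∑ r ∈ Finset.Icc 1 p, c r *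
              ∑ q ∈ Finset.range r, H (u (k - (q : ℤ))) (u (k + (r : ℤ) - (q : ℤ)))) := by
  have hA : ∀ a b, ⟪v b, h (a, b)⟫ = H a b + ψ b := by
    intro a b
    have h1 := hEC a b
    have h2 := hH a b
    rw [inner_sub_left] at h1
    rw [inner_add_left] at h2
    linarith
  have hB : ∀ a b, ⟪v a, h (a, b)⟫ = H a b + ψ a := by
    intro a b
    have h1 := hEC a b
    have h2 := hH a b
    rw [inner_sub_left] at h1
    rw [inner_add_left] at h2
    linarith
  have key : ∀ r : ℕ,
      ⟪v (u k),
        (∑ q ∈ Finset.range r, h (u ((k - 1) - (q : ℤ)), u ((k - 1) + (r : ℤ) - (q : ℤ))))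
          - ∑ q ∈ Finset.range r, h (u (k - (q : ℤ)), u (k + (r : ℤ) - (q : ℤ)))⟫
      = (∑ q ∈ Finset.range r, H (u ((k - 1) - (q : ℤ))) (u ((k - 1) + (r : ℤ) - (q : ℤ))))
          - ∑ q ∈ Finset.range r, H (u (k - (q : ℤ))) (u (k + (r : ℤ) - (q : ℤ))) := by
    intro r
    set F : ℕ → EuclideanSpace ℝ (Fin N) :=
      fun q => h (u (k - (q : ℤ)), u (k + (r : ℤ) - (q : ℤ))) with hF
    set G : ℕ → ℝ :=
      fun q => H (u (k - (q : ℤ))) (u (k + (r : ℤ) - (q : ℤ))) with hG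
    have e1 : (∑ q ∈ Finset.range r,
        h (u ((k - 1) - (q : ℤ)), u ((k - 1) + (r : ℤ) - (q : ℤ))))
        = ∑ q ∈ Finset.range r, F (q + 1) := by
      refine Finset.sum_congr rfl fun q _ => ?_
      simp only [hF]
      congr 2 <;> push_cast <;> ring
    have e2 : (∑ q ∈ Finset.range r,
        H (u ((k - 1) - (q : ℤ))) (u ((k - 1) + (r : ℤ) - (q : ℤ))))
        = ∑ q ∈ Finset.range r, G (q + 1) := by
      refine Finset.sum_congr rfl fun q _ => ?_
      simp only [hG]
      congr 2 <;> push_cast <;> ring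
    rw [e1, e2]
    have t1 : (∑ q ∈ Finset.range r, F (q + 1)) - ∑ q ∈ Finset.range r, F q
        = F r - F 0 := by
      rw [← Finset.sum_sub_distrib, Finset.sum_range_sub]
    have t2 : (∑ q ∈ Finset.range r, G (q + 1)) - ∑ q ∈ Finset.range r, G q
        = G r - G 0 := by
      rw [← Finset.sum_sub_distrib, Finset.sum_range_sub]
    rw [t1, t2]
    have hFr : F r = h (u (k - (r : ℤ)), u k) := by
      simp only [hF]; congr 2; ring
    have hF0 : F 0 = h (u k, u (k + (r : ℤ))) := by
      simp only [hF]; congr 2 <;> push_cast <;> ring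
    have hGr : G r = H (u (k - (r : ℤ))) (u k) := by
      simp only [hG]; congr 2; ring
    have hG0 : G 0 = H (u k) (u (k + (r : ℤ))) := by
      simp only [hG]; congr 2 <;> push_cast <;> ring
    rw [hFr, hF0, hGr, hG0, inner_sub_right, hA, hB]
    ring
  rw [← Finset.sum_sub_distrib, ← Finset.sum_sub_distrib, inner_sum]
  refine Finset.sum_congr rfl fun r _ => ?_
  rw [← smul_sub, real_inner_smul_right, key r, mul_sub]
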